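/- For every non-negative integer n and every integer s, 2 * ∑_{k=1}^{⌈n/2⌉} C(n, 2k-1) * F(2k+s) = F(2n+s+1) - (-1)^s * F(n-s-1), where F is the Fibonacci sequence extended to all integers. -/

import Mathlib

open Finset

private lemma eps_succ (s : ℤ) : (-1:ℤ)^(s+1).natAbs = -(-1:ℤ)^s.natAbs := by
  rcases Int.even_or_odd s with h | h
  · rw [Odd.neg_one_pow (Int.natAbs_odd.mpr (Even.add_one h)),
      Even.neg_one_pow (Int.natAbs_even.mpr h)]
  · rw [Even.neg_one_pow (Int.natAbs_even.mpr (Odd.add_one h)),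
      Odd.neg_one_pow (Int.natAbs_odd.mpr h)]; ring

private lemma eps_sq (s : ℤ) : (-1:ℤ)^s.natAbs * (-1:ℤ)^s.natAbs = 1 := by
  rw [← pow_add]; exact Even.neg_one_pow ⟨s.natAbs, rfl⟩

private lemma fib_step (F : ℤ → ℤ) (hF : ∀ j : ℤ, F j = F (j - 1) + F (j - 2)) (j : ℤ) :
    F (j + 2) = F (j + 1) + F j := by
  have h := hF (j + 2)
  rw [show j+2-1 = j+1 from by ring, show j+2-2 = j from by ring] at h
  exact h

private lemma fib_negnat (F : ℤ → ℤ) (hF0 : F 0 = 0) (hF1 : F 1 = 1)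
    (hF : ∀ j : ℤ, F j = F (j - 1) + F (j - 2)) :
    ∀ n : ℕ, F (-(n:ℤ)) = -(-1:ℤ)^n * F n := by
  intro n
  induction n using Nat.twoStepInduction with
  | zero => simp [hF0]
  | one =>
      have h := hF 1
      rw [show (1:ℤ)-1 = 0 from by ring, show (1:ℤ)-2 = -1 from by ring, hF0, hF1] at h
      push_cast
      rw [hF1]
      linarith
  | more n ih1 ih2 =>
      have hb := hF (-(n:ℤ))
      rw [show -(n:ℤ)-1 = -((n:ℤ)+1) from by ring, show -(n:ℤ)-2 = -((n:ℤ)+2) from by ring] at hb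
      have hf := fib_step F hF (n:ℤ)
      push_cast
      push_cast at ih1 ih2
      have hkey : F (-((n:ℤ)+2)) = F (-(n:ℤ)) - F (-((n:ℤ)+1)) := by linarith
      rw [hkey, ih1, ih2, hf]; ring

private lemma fib_neg (F : ℤ → ℤ) (hF0 : F 0 = 0) (hF1 : F 1 = 1)
    (hF : ∀ j : ℤ, F j = F (j - 1) + F (j - 2)) (s : ℤ) :
    F (-s) = -(-1:ℤ)^s.natAbs * F s := by
  obtain ⟨n, rfl | rfl⟩ := s.eq_nat_or_neg
  · rw [Int.natAbs_natCast]; exact fib_negnat F hF0 hF1 hF n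
  · rw [neg_neg, Int.natAbs_neg, Int.natAbs_natCast, fib_negnat F hF0 hF1 hF n,
      show -(-1:ℤ)^n * (-(-1:ℤ)^n * F (n:ℤ)) = ((-1:ℤ)^n*(-1:ℤ)^n) * F (n:ℤ) from by ring,
      ← pow_add, Even.neg_one_pow ⟨n, rfl⟩, one_mul]

private lemma pascal_sum (n : ℕ) (f : ℕ → ℤ) :
    ∑ j ∈ range (n+2), ((n+1).choose j : ℤ) * f j
      = ∑ j ∈ range (n+1), (n.choose j : ℤ) * f j
        + ∑ j ∈ range (n+1), (n.choose j : ℤ) * f (j+1) := by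
  rw [Finset.sum_range_succ' (fun j => ((n+1).choose j : ℤ) * f j)]
  have h1 : ∀ j ∈ range (n+1), ((n+1).choose (j+1) : ℤ) * f (j+1)
      = (n.choose j : ℤ) * f (j+1) + (n.choose (j+1) : ℤ) * f (j+1) := by
    intro j _
    rw [Nat.choose_succ_succ]
    push_cast; ring
  rw [Finset.sum_congr rfl h1, Finset.sum_add_distrib,
    show (((n+1).choose 0 : ℕ) : ℤ) = ((n.choose 0 : ℕ) : ℤ) from by simp]
  have h2 : ∑ j ∈ range (n+1), (n.choose (j+1) : ℤ) * f (j+1) + (n.choose 0 : ℤ) * f 0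
      = ∑ j ∈ range (n+1), (n.choose j : ℤ) * f j := by
    rw [← Finset.sum_range_succ' (fun j => (n.choose j : ℤ) * f j),
      Finset.sum_range_succ]
    simp
  linarith [h2]

private lemma sumA (F : ℤ → ℤ) (hF : ∀ j : ℤ, F j = F (j - 1) + F (j - 2)) :
    ∀ (n : ℕ) (s : ℤ),
    ∑ j ∈ range (n+1), (n.choose j : ℤ) * F ((j:ℤ) + s) = F (2*(n:ℤ) + s) := by
  intro n
  induction n with
  | zero => intro s; simp
  | succ n ih =>
      intro s
      rw [show n+1+1 = n+2 from rfl, pascal_sum n (fun j => F ((j:ℤ) + s))]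
      have h2 : ∑ j ∈ range (n+1), (n.choose j : ℤ) * F ((((j+1):ℕ):ℤ) + s)
          = ∑ j ∈ range (n+1), (n.choose j : ℤ) * F ((j:ℤ) + (s+1)) := by
        apply Finset.sum_congr rfl; intro j _
        rw [show ((((j+1):ℕ):ℤ)) + s = (j:ℤ) + (s+1) from by push_cast; ring]
      rw [h2, ih s, ih (s+1)]
      have hf := fib_step F hF (2*(n:ℤ) + s)
      push_cast
      rw [show 2*((n:ℤ)+1)+s = 2*(n:ℤ)+s+2 from by ring, hf]
      ring

private lemma sumB (F : ℤ → ℤ) (hF0 : F 0 = 0) (hF1 : F 1 = 1)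
    (hF : ∀ j : ℤ, F j = F (j - 1) + F (j - 2)) :
    ∀ (n : ℕ) (s : ℤ),
    ∑ j ∈ range (n+1), (-1:ℤ)^j * (n.choose j : ℤ) * F ((j:ℤ) + s)
      = -(-1:ℤ)^s.natAbs * F ((n:ℤ) - s) := by
  intro n
  induction n with
  | zero =>
      intro s
      simp only [range_one, sum_singleton, pow_zero, Nat.choose_zero_right, Nat.cast_one,
        Nat.cast_zero, zero_add, one_mul]
      rw [zero_sub, fib_neg F hF0 hF1 hF s,
        show -(-1:ℤ)^s.natAbs * (-(-1:ℤ)^s.natAbs * F s)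
          = ((-1:ℤ)^s.natAbs * (-1:ℤ)^s.natAbs) * F s from by ring, eps_sq, one_mul]
  | succ n ih =>
      intro s
      have hps := pascal_sum n (fun j => (-1:ℤ)^j * F ((j:ℤ) + s))
      have h1 : ∑ j ∈ range (n+2), (-1:ℤ)^j * ((n+1).choose j : ℤ) * F ((j:ℤ) + s)
          = ∑ j ∈ range (n+2), ((n+1).choose j : ℤ) * ((-1:ℤ)^j * F ((j:ℤ) + s)) := by
        apply Finset.sum_congr rfl; intro j _; ring
      have h2 : ∑ j ∈ range (n+1), (n.choose j : ℤ) * ((-1:ℤ)^j * F ((j:ℤ) + s))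
          = ∑ j ∈ range (n+1), (-1:ℤ)^j * (n.choose j : ℤ) * F ((j:ℤ) + s) := by
        apply Finset.sum_congr rfl; intro j _; ring
      have h3 : ∑ j ∈ range (n+1), (n.choose j : ℤ) * ((-1:ℤ)^(j+1) * F ((((j+1):ℕ):ℤ) + s))
          = -∑ j ∈ range (n+1), (-1:ℤ)^j * (n.choose j : ℤ) * F ((j:ℤ) + (s+1)) := by
        rw [← Finset.sum_neg_distrib]
        apply Finset.sum_congr rfl; intro j _
        rw [show ((((j+1):ℕ):ℤ)) + s = (j:ℤ) + (s+1) from by push_cast; ring]; ring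
      rw [show n+1+1 = n+2 from rfl, h1, hps]
      rw [h2, h3, ih s, ih (s+1), eps_succ]
      have hf := fib_step F hF ((n:ℤ) - s - 1)
      rw [show (n:ℤ)-s-1+2 = (n:ℤ)+1-s from by ring,
        show (n:ℤ)-s-1+1 = (n:ℤ)-s from by ring] at hf
      push_cast
      rw [hf, show (n:ℤ) - (s+1) = (n:ℤ) - s - 1 from by ring]
      ring

private lemma odd_reindex (n : ℕ) (g : ℕ → ℤ) :
    ∑ j ∈ range (n+1), (1 - (-1:ℤ)^j) * (n.choose j : ℤ) * g j
      = 2 * ∑ k ∈ Finset.Icc 1 ((n+1)/2), (n.choose (2*k-1) : ℤ) * g (2*k-1) := by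
  rw [Finset.mul_sum,
    ← Finset.sum_filter_add_sum_filter_not (range (n+1)) (fun j => Odd j)]
  have h2 : ∑ j ∈ (range (n+1)).filter (fun j => ¬ Odd j),
      (1 - (-1:ℤ)^j) * (n.choose j : ℤ) * g j = 0 := by
    apply Finset.sum_eq_zero
    intro j hj
    rw [Finset.mem_filter] at hj
    rw [Even.neg_one_pow (Nat.not_odd_iff_even.mp hj.2)]
    ring
  rw [h2, add_zero]
  apply Finset.sum_nbij' (i := fun j => (j+1)/2) (j := fun k => 2*k-1)
  · intro j hj
    simp only [Finset.mem_filter, Finset.mem_range] at hj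
    obtain ⟨hjn, m, rfl⟩ := hj
    rw [Finset.mem_Icc]
    omega
  · intro k hk
    rw [Finset.mem_Icc] at hk
    simp only [Finset.mem_filter, Finset.mem_range]
    exact ⟨by omega, ⟨k-1, by omega⟩⟩
  · intro j hj
    simp only [Finset.mem_filter, Finset.mem_range] at hj
    obtain ⟨hjn, m, rfl⟩ := hj
    omega
  · intro k hk
    rw [Finset.mem_Icc] at hk
    omega
  · intro j hj
    simp only [Finset.mem_filter, Finset.mem_range] at hj
    obtain ⟨hjn, m, rfl⟩ := hj
    rw [Odd.neg_one_pow ⟨m, rfl⟩,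
      show (2*m+1+1)/2 = m+1 from by omega, show 2*(m+1)-1 = 2*m+1 from by omega]
    ring

theorem stmt10 (F : ℤ → ℤ) (hF0 : F 0 = 0) (hF1 : F 1 = 1)
    (hF : ∀ j : ℤ, F j = F (j - 1) + F (j - 2)) (n : ℕ) (s : ℤ) :
    2 * ∑ k ∈ Finset.Icc 1 ((n + 1) / 2), (n.choose (2 * k - 1) : ℤ) * F (2 * (k : ℤ) + s)
      = F (2 * (n : ℤ) + s + 1) - (-1 : ℤ) ^ s.natAbs * F ((n : ℤ) - s - 1) := by
  have hA := sumA F hF n (s+1)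
  have hB := sumB F hF0 hF1 hF n (s+1)
  have hre := odd_reindex n (fun j => F ((j:ℤ) + (s+1)))
  have hsplit : ∑ j ∈ range (n+1), (1 - (-1:ℤ)^j) * (n.choose j : ℤ) * F ((j:ℤ) + (s+1))
      = F (2*(n:ℤ) + (s+1)) - -(-1:ℤ)^(s+1).natAbs * F ((n:ℤ) - (s+1)) := by
    rw [← hA, ← hB, ← Finset.sum_sub_distrib]
    apply Finset.sum_congr rfl; intro j _; ring
  have htarget : ∑ k ∈ Finset.Icc 1 ((n+1)/2), (n.choose (2*k-1) : ℤ) * F (2*(k:ℤ) + s)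
      = ∑ k ∈ Finset.Icc 1 ((n+1)/2), (n.choose (2*k-1) : ℤ) * F (((2*k-1:ℕ):ℤ) + (s+1)) := by
    apply Finset.sum_congr rfl
    intro k hk
    rw [Finset.mem_Icc] at hk
    rw [show ((2*k-1:ℕ):ℤ) + (s+1) = 2*(k:ℤ) + s from by
      push_cast [Nat.cast_sub (by omega : 1 ≤ 2*k)]; ring]
  rw [htarget, ← hre, hsplit, eps_succ]
  rw [show 2*(n:ℤ) + (s+1) = 2*(n:ℤ) + s + 1 from by ring,
    show (n:ℤ) - (s+1) = (n:ℤ) - s - 1 from by ring]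
  ring
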